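/- Let A be a nontrivial additive commutative group and let s, u, u', p be natural numbers with 0 ≤ u' < u, 1 ≤ u − u' ≤ s, and ⌊s/(u−u')⌋ ≤ p. Then there exists a claimed-values table W : Fin (s + u − u') → Fin p → A on the s + u − u' responding workers such that for every finite set I ⊆ Fin p with |I| < ⌊s/(u−u')⌋ there exist g¹, g² : Fin p → A and M¹, M² ⊆ Fin (s+u−u') with |M¹| ≤ s and |M²| ≤ s such that W is consistent with (g¹, M¹) and with (g², M²), g¹ i = g² i for every i ∈ I, and ∑_i g¹ i ≠ ∑_i g² i. (Straggler extension of the converse: with u' straggling honest workers in a group of s+u workers, at least ⌊s/(u−u')⌋ local computations are needed.) -/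

import Mathlib

/-- Straggler extension of the converse: with `u'` straggling honest workers in
a group of `s+u` workers, at least ⌊s/(u−u')⌋ local computations are needed. -/
theorem symmetrization_attack_with_stragglers
    (A : Type*) [AddCommGroup A] [Nontrivial A]
    (s u u' p : ℕ) (hu' : u' < u) (h1 : 1 ≤ u - u') (h2 : u - u' ≤ s)
    (hp : s / (u - u') ≤ p) :
    ∃ W : Fin (s + u - u') → Fin p → A,
      ∀ I : Finset (Fin p), I.card < s / (u - u') →
        ∃ (g₁ g₂ : Fin p → A) (M₁ M₂ : Finset (Fin (s + u - u'))),
          M₁.card ≤ s ∧ M₂.card ≤ s ∧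
          (∀ j ∉ M₁, ∀ i, W j i = g₁ i) ∧
          (∀ j ∉ M₂, ∀ i, W j i = g₂ i) ∧
          (∀ i ∈ I, g₁ i = g₂ i) ∧
          ∑ i, g₁ i ≠ ∑ i, g₂ i := by
  obtain ⟨a, ha⟩ := exists_ne (0 : A)
  set q := u - u' with hqdef
  set t := s / q with htdef
  have hq1 : 1 ≤ q := h1
  have hts : t * q ≤ s := Nat.div_mul_le_self s q
  have hn : s + u - u' = s + q := by omega
  refine ⟨fun j i => if (j : ℕ) / q = (i : ℕ) ∧ (j : ℕ) < t * q then a else 0, ?_⟩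
  intro I hI
  have htp : t ≤ p := hp
  -- find a coordinate k with k < t and k ∉ I
  have hcard : I.card < (Finset.univ.image (Fin.castLE htp)).card := by
    rw [Finset.card_image_of_injective _ (Fin.castLE_injective htp)]
    simpa using hI
  obtain ⟨k, hkK, hkI⟩ : ∃ k ∈ Finset.univ.image (Fin.castLE htp), k ∉ I := by
    by_contra h
    push_neg at h
    exact absurd (Finset.card_le_card h) (not_le.mpr hcard)
  obtain ⟨m0, -, rfl⟩ := Finset.mem_image.mp hkK
  have hkt : ((Fin.castLE htp m0 : Fin p) : ℕ) < t := m0.2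
  set k : Fin p := Fin.castLE htp m0 with hkdef
  -- the group of workers claiming nonzero at coordinate k
  have hstep : (k : ℕ) * q + q ≤ t * q := by
    have h := Nat.mul_le_mul_right q hkt
    rwa [Nat.succ_mul] at h
  have hbound : ∀ m : Fin q, (k : ℕ) * q + (m : ℕ) < s + u - u' := by
    intro m
    have hm := m.2
    omega
  set G : Finset (Fin (s + u - u')) :=
    Finset.univ.image (fun m : Fin q => (⟨(k : ℕ) * q + (m : ℕ), hbound m⟩ : Fin (s + u - u'))) with hGdef
  have hGcard : G.card = q := by
    rw [hGdef, Finset.card_image_of_injective, Finset.card_univ, Fintype.card_fin]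
    intro x y hxy
    have := Fin.mk.injEq .. ▸ hxy
    exact Fin.ext (by omega)
  refine ⟨0, fun i => if i = k then a else 0,
    Finset.univ.filter (fun j : Fin (s + u - u') => (j : ℕ) < t * q), Gᶜ, ?_, ?_, ?_, ?_, ?_, ?_⟩
  · calc (Finset.univ.filter (fun j : Fin (s + u - u') => (j : ℕ) < t * q)).card
        ≤ t * q := by
          have : (Finset.univ.filter (fun j : Fin (s + u - u') => (j : ℕ) < t * q)).card
              ≤ (Finset.range (t * q)).card :=
            Finset.card_le_card_of_injOn Fin.val
              (fun x hx => by
                simp only [Finset.mem_coe, Finset.mem_filter, Finset.mem_univ, true_and] at hx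
                exact Finset.mem_coe.mpr (Finset.mem_range.mpr hx))
              (Fin.val_injective.injOn)
          simpa using this
      _ ≤ s := hts
  · have : Gᶜ.card = (s + u - u') - q := by
      rw [Finset.card_compl, hGcard, Fintype.card_fin]
    omega
  · intro j hj i
    simp only [Finset.mem_filter, Finset.mem_univ, true_and, not_lt] at hj
    simp only [Pi.zero_apply]
    rw [if_neg]; omega
  · intro j hj i
    rw [Finset.mem_compl, not_not] at hj
    obtain ⟨m, -, rfl⟩ := Finset.mem_image.mp hj
    have hdiv : ((k : ℕ) * q + (m : ℕ)) / q = (k : ℕ) := by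
      rw [mul_comm, Nat.mul_add_div hq1, Nat.div_eq_of_lt m.2, Nat.add_zero]
    have hlt : (k : ℕ) * q + (m : ℕ) < t * q := by
      have := m.2; omega
    by_cases hik : i = k
    · subst hik
      simp [hdiv, hlt]
    · have hne : ¬ (((k : ℕ) * q + (m : ℕ)) / q = (i : ℕ) ∧ (k : ℕ) * q + (m : ℕ) < t * q) := by
        rintro ⟨h', -⟩
        rw [hdiv] at h'
        exact hik (Fin.ext h'.symm)
      simp [hne, hik]
  · intro i hi
    simp only [Pi.zero_apply]
    rw [if_neg]; rintro rfl; exact hkI hi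
  · simp only [Pi.zero_apply, Finset.sum_const_zero, Finset.sum_ite_eq', Finset.mem_univ, if_true]
    exact fun h => ha h.symm
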